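/- Consider the control system on [0,1]: ẋ₁ = u, ẋ₂ = x₁ sin(2πu), with u(t) ∈ [0,1] and x₁(0) = x₂(0) = 0. The pair x̄ ≡ (0,0), ū ≡ 0 is not a strong local minimum of the cost x₂(1): for every ε > 0 there exists a measurable control u with values in [0,1] whose trajectory x satisfies |x(t)| < ε for all t ∈ [0,1] and x₂(1) < 0. -/

import Mathlib

open Set MeasureTheory intervalIntegral Real

lemma bdd_intervalIntegrable {f : ℝ → ℝ} {a b C : ℝ} (hf : Measurable f)
    (hC : ∀ s ∈ Set.uIcc a b, |f s| ≤ C) : IntervalIntegrable f volume a b := by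
  rw [intervalIntegrable_iff]
  refine MeasureTheory.Integrable.mono' (g := fun _ => C)
    (integrableOn_const measure_Ioc_lt_top.ne) hf.aestronglyMeasurable ?_
  refine (MeasureTheory.ae_restrict_iff' measurableSet_uIoc).2
    (Filter.Eventually.of_forall fun s hs => ?_)
  simpa using hC s (Set.Ioc_subset_Icc_self hs)

lemma sin_3pi2 : Real.sin (2 * π * (3/4)) = -1 := by
  have h : (2 * π * (3/4) : ℝ) = π + π/2 := by ring
  rw [h, Real.sin_add]
  simp

/-- Example 5.1, failure of strong minimality: for every `ε > 0` there is a
measurable control with values in `[0,1]` whose trajectory stays within `ε`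
of the zero trajectory and reaches `x₂(1) < 0`. -/
theorem example_not_strong_minimum :
    ∀ ε > (0:ℝ), ∃ (u x₁ x₂ : ℝ → ℝ),
      Measurable u ∧ (∀ t ∈ Icc (0:ℝ) 1, u t ∈ Icc (0:ℝ) 1) ∧
      (∀ t ∈ Icc (0:ℝ) 1, x₁ t = ∫ s in (0:ℝ)..t, u s) ∧
      (∀ t ∈ Icc (0:ℝ) 1, x₂ t = ∫ s in (0:ℝ)..t, x₁ s * Real.sin (2 * π * u s)) ∧
      (∀ t ∈ Icc (0:ℝ) 1, |x₁ t| < ε ∧ |x₂ t| < ε) ∧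
      x₂ 1 < 0 := by
  intro ε hε
  set c : ℝ := min ε 1 / 2 with hc
  have hc0 : 0 < c := by positivity
  have hc1 : c ≤ 1/2 := by
    have := min_le_right ε 1; simp only [hc]; linarith
  have hcε : c ≤ ε/2 := by
    have := min_le_left ε 1; simp only [hc]; linarith
  set u : ℝ → ℝ := fun s => if s ≤ c then (3/4 : ℝ) else 0 with hu
  have humeas : Measurable u := Measurable.ite measurableSet_Iic measurable_const measurable_const
  have hubd : ∀ s, |u s| ≤ 3/4 := by
    intro s; simp only [hu]; split <;> rw [abs_le] <;> norm_num
  have huint : ∀ a b : ℝ, IntervalIntegrable u volume a b := fun a b =>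
    bdd_intervalIntegrable humeas (fun s _ => hubd s)
  set x₁ : ℝ → ℝ := fun t => ∫ s in (0:ℝ)..t, u s with hx1
  -- formula for x₁
  have hx1f : ∀ t, 0 ≤ t → x₁ t = (3/4) * min t c := by
    intro t ht
    rcases le_or_gt t c with h | h
    · have : x₁ t = ∫ s in (0:ℝ)..t, (3/4 : ℝ) := by
        refine intervalIntegral.integral_congr_ae (Filter.Eventually.of_forall fun s hs => ?_)
        rw [Set.uIoc_of_le ht] at hs
        simp only [hu]; rw [if_pos (le_trans hs.2 h)]
      rw [this, intervalIntegral.integral_const, min_eq_left h, smul_eq_mul]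
      ring
    · have hsplit : x₁ t = (∫ s in (0:ℝ)..c, u s) + ∫ s in c..t, u s := by
        rw [hx1]
        exact (intervalIntegral.integral_add_adjacent_intervals (huint 0 c) (huint c t)).symm
      have h1 : (∫ s in (0:ℝ)..c, u s) = (3/4) * c := by
        have : (∫ s in (0:ℝ)..c, u s) = ∫ s in (0:ℝ)..c, (3/4 : ℝ) := by
          refine intervalIntegral.integral_congr_ae (Filter.Eventually.of_forall fun s hs => ?_)
          rw [Set.uIoc_of_le hc0.le] at hs
          simp only [hu]; rw [if_pos hs.2]
        rw [this, intervalIntegral.integral_const, smul_eq_mul]; ring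
      have h2 : (∫ s in c..t, u s) = 0 := by
        have : (∫ s in c..t, u s) = ∫ s in c..t, (0 : ℝ) := by
          refine intervalIntegral.integral_congr_ae (Filter.Eventually.of_forall fun s hs => ?_)
          rw [Set.uIoc_of_le h.le] at hs
          simp only [hu]; rw [if_neg (not_le.2 hs.1)]
        rw [this]; simp
      rw [hsplit, h1, h2, min_eq_right h.le]; ring
  -- the auxiliary explicit integrand for x₂
  set g : ℝ → ℝ := fun s => if s ≤ c then -(3/4) * s else 0 with hg
  have hgmeas : Measurable g :=
    Measurable.ite measurableSet_Iic ((measurable_const).mul measurable_id) measurable_const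
  have hgbd : ∀ s ∈ Set.Icc (0:ℝ) 1, |g s| ≤ 3/4 := by
    intro s hs
    simp only [hg]
    split
    · rw [abs_le]; constructor <;> nlinarith [hs.1, hs.2]
    · rw [abs_le]; constructor <;> norm_num
  have hgint : ∀ a b, a ∈ Set.Icc (0:ℝ) 1 → b ∈ Set.Icc (0:ℝ) 1 →
      IntervalIntegrable g volume a b := by
    intro a b ha hb
    refine bdd_intervalIntegrable hgmeas fun s hs => hgbd s ?_
    rcases Set.mem_uIcc.1 hs with h | h
    · exact ⟨le_trans ha.1 h.1, le_trans h.2 hb.2⟩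
    · exact ⟨le_trans hb.1 h.1, le_trans h.2 ha.2⟩
  -- equality of the true integrand and g on (0, t]
  have hcongr : ∀ t ∈ Set.Icc (0:ℝ) 1,
      (∫ s in (0:ℝ)..t, x₁ s * Real.sin (2 * π * u s)) = ∫ s in (0:ℝ)..t, g s := by
    intro t ht
    refine intervalIntegral.integral_congr_ae (Filter.Eventually.of_forall fun s hs => ?_)
    rw [Set.uIoc_of_le ht.1] at hs
    rcases le_or_gt s c with h | h
    · have hus : u s = 3/4 := by simp only [hu]; rw [if_pos h]
      have hx : x₁ s = (3/4) * s := by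
        rw [hx1f s hs.1.le, min_eq_left h]
      rw [hus, hx, sin_3pi2]
      simp only [hg]; rw [if_pos h]; ring
    · have hus : u s = 0 := by simp only [hu]; rw [if_neg (not_le.2 h)]
      rw [hus]
      simp only [hg]; rw [if_neg (not_le.2 h)]
      simp
  -- formula for the g-integral
  have hgf : ∀ t ∈ Set.Icc (0:ℝ) 1, (∫ s in (0:ℝ)..t, g s) = -(3/8) * (min t c)^2 := by
    intro t ht
    have hc01 : c ∈ Set.Icc (0:ℝ) 1 := ⟨hc0.le, by linarith⟩
    rcases le_or_gt t c with h | h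
    · have : (∫ s in (0:ℝ)..t, g s) = ∫ s in (0:ℝ)..t, -(3/4) * s := by
        refine intervalIntegral.integral_congr_ae (Filter.Eventually.of_forall fun s hs => ?_)
        rw [Set.uIoc_of_le ht.1] at hs
        simp only [hg]; rw [if_pos (le_trans hs.2 h)]
      rw [this, intervalIntegral.integral_const_mul, integral_id, min_eq_left h]
      ring
    · have hsplit : (∫ s in (0:ℝ)..t, g s) = (∫ s in (0:ℝ)..c, g s) + ∫ s in c..t, g s :=
        (intervalIntegral.integral_add_adjacent_intervals
          (hgint 0 c (by norm_num) hc01) (hgint c t hc01 ht)).symm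
      have h1 : (∫ s in (0:ℝ)..c, g s) = -(3/8) * c^2 := by
        have : (∫ s in (0:ℝ)..c, g s) = ∫ s in (0:ℝ)..c, -(3/4) * s := by
          refine intervalIntegral.integral_congr_ae (Filter.Eventually.of_forall fun s hs => ?_)
          rw [Set.uIoc_of_le hc0.le] at hs
          simp only [hg]; rw [if_pos hs.2]
        rw [this, intervalIntegral.integral_const_mul, integral_id]
        ring
      have h2 : (∫ s in c..t, g s) = 0 := by
        have : (∫ s in c..t, g s) = ∫ s in c..t, (0:ℝ) := by
          refine intervalIntegral.integral_congr_ae (Filter.Eventually.of_forall fun s hs => ?_)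
          rw [Set.uIoc_of_le h.le] at hs
          simp only [hg]; rw [if_neg (not_le.2 hs.1)]
        rw [this]; simp
      rw [hsplit, h1, h2, min_eq_right h.le]; ring
  set x₂ : ℝ → ℝ := fun t => ∫ s in (0:ℝ)..t, x₁ s * Real.sin (2 * π * u s) with hx2
  have hx2f : ∀ t ∈ Set.Icc (0:ℝ) 1, x₂ t = -(3/8) * (min t c)^2 := fun t ht => by
    show (∫ s in (0:ℝ)..t, x₁ s * Real.sin (2 * π * u s)) = _; rw [hcongr t ht, hgf t ht]
  refine ⟨u, x₁, x₂, humeas, ?_, fun t _ => rfl, fun t _ => rfl, ?_, ?_⟩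
  · intro t _
    simp only [hu]
    split <;> constructor <;> norm_num
  · intro t ht
    have hmin0 : 0 ≤ min t c := le_min ht.1 hc0.le
    have hminc : min t c ≤ c := min_le_right t c
    constructor
    · rw [hx1f t ht.1, abs_of_nonneg (by positivity)]
      nlinarith
    · rw [hx2f t ht, abs_of_nonpos (by nlinarith), neg_mul, neg_neg]
      nlinarith
  · have h1 : (1:ℝ) ∈ Set.Icc (0:ℝ) 1 := by norm_num
    rw [hx2f 1 h1, min_eq_right (by linarith)]
    nlinarith
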